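/- Let F be a finite family of subsets of a finite set V and ε > 0 a rational. Then there exists a distribution π on F (a function π: F → ℚ≥0 with ∑_{X∈F} π(X) = 1) such that for every v ∈ V, ∑_{X∈F, v∈X} π(X) ≤ ε, if and only if for every nonnegative weight function w: V → ℚ≥0 there exists X ∈ F with ∑_{v∈X} w(v) ≤ ε · ∑_{v∈V} w(v). -/

import Mathlib

namespace FarkasAux

variable {ι : Type*} [Fintype ι]

def dot (x y : ι → ℚ) : ℚ := ∑ i, x i * y i

lemma dot_sub_smul_left (z y x : ι → ℚ) (c : ℚ) :
    dot (z - c • y) x = dot z x - c * dot y x := by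
  unfold dot
  rw [Finset.mul_sum, ← Finset.sum_sub_distrib]
  refine Finset.sum_congr rfl fun i _ => ?_
  simp [Pi.sub_apply, Pi.smul_apply, smul_eq_mul]; ring

lemma dot_sub_smul_right (z x a : ι → ℚ) (c : ℚ) :
    dot z (x - c • a) = dot z x - c * dot z a := by
  unfold dot
  rw [Finset.mul_sum, ← Finset.sum_sub_distrib]
  refine Finset.sum_congr rfl fun i _ => ?_
  simp [Pi.sub_apply, Pi.smul_apply, smul_eq_mul]; ring

lemma dot_self_pos {b : ι → ℚ} (hb : b ≠ 0) : 0 < dot b b := by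
  have h : ∃ i, b i ≠ 0 := by
    by_contra h; push_neg at h; exact hb (funext h)
  obtain ⟨i, hi⟩ := h
  exact Finset.sum_pos' (fun j _ => mul_self_nonneg _)
    ⟨i, Finset.mem_univ _, mul_self_pos.2 hi⟩

inductive InCone (L : List (ι → ℚ)) : (ι → ℚ) → Prop
  | zero : InCone L 0
  | add {b : ι → ℚ} {c : ℚ} {a : ι → ℚ} (ha : a ∈ L) (hc : 0 ≤ c) (hb : InCone L b) :
      InCone L (b + c • a)

lemma InCone.mono {L L' : List (ι → ℚ)} (h : ∀ a ∈ L, a ∈ L') {b : ι → ℚ}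
    (hb : InCone L b) : InCone L' b := by
  induction hb with
  | zero => exact .zero
  | add ha hc _ ih => exact .add (h _ ha) hc ih

lemma InCone.lift {L : List (ι → ℚ)} {a : ι → ℚ} {f : (ι → ℚ) → (ι → ℚ)}
    (hf : ∀ a' ∈ L, ∃ m : ℚ, 0 ≤ m ∧ f a' = a' + m • a) {b : ι → ℚ}
    (hb : InCone (L.map f) b) : InCone (a :: L) b := by
  induction hb with
  | zero => exact .zero
  | @add b' c x hx hc _ ih =>
    obtain ⟨a', ha', rfl⟩ := List.mem_map.mp hx
    obtain ⟨m, hm, hfa⟩ := hf a' ha'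
    rw [hfa, smul_add, ← add_assoc, smul_smul]
    exact .add List.mem_cons_self (mul_nonneg hc hm)
      (.add (List.mem_cons_of_mem _ ha') hc ih)

theorem farkasAux : ∀ (n : ℕ) (L : List (ι → ℚ)), L.length ≤ n → ∀ b : ι → ℚ,
    InCone L b ∨ ∃ y : ι → ℚ, (∀ a ∈ L, dot y a ≤ 0) ∧ 0 < dot y b := by
  intro n
  induction n with
  | zero =>
    intro L hL b
    rw [Nat.le_zero, List.length_eq_zero_iff] at hL
    subst hL
    by_cases hb : b = 0
    · exact Or.inl (hb ▸ InCone.zero)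
    · exact Or.inr ⟨b, by simp, dot_self_pos hb⟩
  | succ n ih =>
    intro L hL b
    cases L with
    | nil =>
      by_cases hb : b = 0
      · exact Or.inl (hb ▸ InCone.zero)
      · exact Or.inr ⟨b, by simp, dot_self_pos hb⟩
    | cons a L' =>
      have hL' : L'.length ≤ n := by simpa using hL
      rcases ih L' hL' b with hb | ⟨y, hy, hyb⟩
      · exact Or.inl (hb.mono fun x hx => List.mem_cons_of_mem _ hx)
      · by_cases hya : dot y a ≤ 0
        · refine Or.inr ⟨y, ?_, hyb⟩
          intro x hx
          rcases List.mem_cons.mp hx with rfl | hx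
          · exact hya
          · exact hy _ hx
        · push_neg at hya
          set k := dot y a with hk
          set f : (ι → ℚ) → (ι → ℚ) := fun a' => a' - (dot y a' / k) • a with hf
          set b' : ι → ℚ := b - (dot y b / k) • a with hb'
          rcases ih (L'.map f) (by simpa using hL') b' with hc | ⟨z, hz, hzb⟩
          · left
            have hlift : InCone (a :: L') b' := by
              refine hc.lift (fun a' ha' => ⟨-(dot y a' / k), ?_, ?_⟩)
              · have : dot y a' / k ≤ 0 :=
                  div_nonpos_iff.mpr (Or.inr ⟨hy _ ha', hya.le⟩)
                linarith
              · simp [hf, sub_eq_add_neg, neg_smul]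
            have := InCone.add (List.mem_cons_self (a := a) (l := L')) (div_nonneg hyb.le hya.le) hlift
            simpa [hb', sub_add_cancel] using this
          · right
            refine ⟨z - (dot z a / k) • y, ?_, ?_⟩
            · intro x hx
              rcases List.mem_cons.mp hx with rfl | hx
              · rw [dot_sub_smul_left, div_mul_cancel₀ _ hya.ne']
                simp
              · have h1 := hz (f x) (List.mem_map_of_mem (f := f) hx)
                rw [hf] at h1
                simp only at h1
                rw [dot_sub_smul_right] at h1
                rw [dot_sub_smul_left]
                have : dot z a / k * dot y x = dot y x / k * dot z a := by ring
                linarith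
            · rw [dot_sub_smul_left]
              rw [hb', dot_sub_smul_right] at hzb
              have : dot z a / k * dot y b = dot y b / k * dot z a := by ring
              linarith

theorem farkas (L : List (ι → ℚ)) (b : ι → ℚ) :
    InCone L b ∨ ∃ y : ι → ℚ, (∀ a ∈ L, dot y a ≤ 0) ∧ 0 < dot y b :=
  farkasAux L.length L le_rfl b

lemma InCone.exists_coeff [DecidableEq ι] {L : List (ι → ℚ)} {b : ι → ℚ}
    (h : InCone L b) :
    ∃ c : (ι → ℚ) → ℚ, (∀ x, 0 ≤ c x) ∧ b = ∑ x ∈ L.toFinset, c x • x := by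
  induction h with
  | zero => exact ⟨0, fun x => le_rfl, by simp⟩
  | @add b' c₀ a ha hc _ ih =>
    obtain ⟨c, hc0, hsum⟩ := ih
    refine ⟨fun x => c x + if x = a then c₀ else 0, ?_, ?_⟩
    · intro x
      by_cases hx : x = a <;> simp [hx]
      · exact add_nonneg (hc0 a) hc
      · exact hc0 x
    · rw [hsum]
      rw [Finset.sum_congr rfl (fun x _ => add_smul (c x) _ x), Finset.sum_add_distrib]
      congr 1
      rw [Finset.sum_congr rfl (fun x _ => ite_smul _ _ _ _)]
      simp [Finset.sum_ite_eq', List.mem_toFinset.mpr ha]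



section App

variable {V : Type*} [Fintype V] [DecidableEq V]

def gvec (X : Finset V) : Option V → ℚ :=
  fun i => match i with | none => 1 | some v => if v ∈ X then 1 else 0

def evec (v : V) : Option V → ℚ :=
  fun i => if i = some v then 1 else 0

def bvec (ε : ℚ) : Option V → ℚ :=
  fun i => match i with | none => 1 | some _ => ε

lemma dot_gvec (y : Option V → ℚ) (X : Finset V) :
    dot y (gvec X) = y none + ∑ v ∈ X, y (some v) := by
  unfold dot gvec
  rw [Fintype.sum_option]
  simp [mul_ite, Finset.sum_ite_mem]

lemma dot_evec (y : Option V → ℚ) (v : V) :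
    dot y (evec v) = y (some v) := by
  unfold dot evec
  simp [mul_ite, Finset.sum_ite_eq']

lemma dot_bvec (y : Option V → ℚ) (ε : ℚ) :
    dot y (bvec ε) = y none + ε * ∑ v : V, y (some v) := by
  unfold dot bvec
  rw [Fintype.sum_option, Finset.mul_sum]
  simp [mul_comm]

end App


end FarkasAux

open FarkasAux

theorem stmt_0 {V : Type*} [Fintype V] [DecidableEq V]
    (F : Finset (Finset V)) (ε : ℚ) (hε : 0 < ε) :
    (∃ π : Finset V → ℚ, (∀ X, 0 ≤ π X) ∧ (∑ X ∈ F, π X = 1) ∧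
      ∀ v : V, ∑ X ∈ F.filter (fun X => v ∈ X), π X ≤ ε) ↔
    (∀ w : V → ℚ, (∀ v, 0 ≤ w v) →
      ∃ X ∈ F, ∑ v ∈ X, w v ≤ ε * ∑ v : V, w v) := by
  constructor
  · rintro ⟨π, hπ0, hπ1, hπε⟩ w hw
    by_contra hcon
    push_neg at hcon
    have hex : ∃ X ∈ F, 0 < π X := by
      by_contra h
      push_neg at h
      have h0 : ∑ X ∈ F, π X = 0 :=
        Finset.sum_eq_zero fun X hX => le_antisymm (h X hX) (hπ0 X)
      rw [hπ1] at h0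
      norm_num at h0
    obtain ⟨X₀, hX₀F, hX₀⟩ := hex
    have key1 : ∑ X ∈ F, π X * ∑ v ∈ X, w v
        = ∑ v : V, (∑ X ∈ F.filter (fun X => v ∈ X), π X) * w v := by
      calc ∑ X ∈ F, π X * ∑ v ∈ X, w v
          = ∑ X ∈ F, ∑ v ∈ Finset.univ, (if v ∈ X then π X * w v else 0) := by
            refine Finset.sum_congr rfl fun X _ => ?_
            rw [Finset.mul_sum]
            simp [Finset.sum_ite_mem]
        _ = ∑ v ∈ Finset.univ, ∑ X ∈ F, (if v ∈ X then π X * w v else 0) :=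
            Finset.sum_comm
        _ = ∑ v : V, (∑ X ∈ F.filter (fun X => v ∈ X), π X) * w v := by
            refine Finset.sum_congr rfl fun v _ => ?_
            rw [Finset.sum_filter, Finset.sum_mul]
            refine Finset.sum_congr rfl fun X _ => ?_
            by_cases h : v ∈ X <;> simp [h]
    have key2 : ∑ v : V, (∑ X ∈ F.filter (fun X => v ∈ X), π X) * w v
        ≤ ε * ∑ v : V, w v := by
      rw [Finset.mul_sum]
      exact Finset.sum_le_sum fun v _ => mul_le_mul_of_nonneg_right (hπε v) (hw v)
    have key3 : ∑ X ∈ F, π X * (ε * ∑ v : V, w v) < ∑ X ∈ F, π X * ∑ v ∈ X, w v :=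
      Finset.sum_lt_sum (fun X hX => mul_le_mul_of_nonneg_left (hcon X hX).le (hπ0 X))
        ⟨X₀, hX₀F, mul_lt_mul_of_pos_left (hcon X₀ hX₀F) hX₀⟩
    have key4 : ∑ X ∈ F, π X * (ε * ∑ v : V, w v) = ε * ∑ v : V, w v := by
      rw [← Finset.sum_mul, hπ1, one_mul]
    linarith
  · intro hRHS
    classical
    set L : List (Option V → ℚ) :=
      (F.toList.map gvec) ++ ((Finset.univ : Finset V).toList.map evec) with hL
    have hgL : ∀ X ∈ F, gvec X ∈ L := fun X hX =>
      List.mem_append_left _ (List.mem_map_of_mem (f := gvec) (Finset.mem_toList.mpr hX))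
    have heL : ∀ v : V, evec v ∈ L := fun v =>
      List.mem_append_right _
        (List.mem_map_of_mem (f := evec) (Finset.mem_toList.mpr (Finset.mem_univ v)))
    rcases farkas L (bvec ε) with hc | ⟨y, hy, hyb⟩
    · obtain ⟨c, hc0, hsum⟩ := hc.exists_coeff
      have hT : L.toFinset = (F.image gvec) ∪ ((Finset.univ : Finset V).image evec) := by
        ext x
        simp [hL]
      have hdisj : Disjoint (F.image gvec) ((Finset.univ : Finset V).image evec) := by
        rw [Finset.disjoint_left]
        rintro x hx hx'
        obtain ⟨X, _, rfl⟩ := Finset.mem_image.mp hx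
        obtain ⟨v, _, hev⟩ := Finset.mem_image.mp hx'
        have h0 := congrFun hev none
        simp [gvec, evec] at h0
      have hginj : ∀ X ∈ F, ∀ X' ∈ F, gvec X = gvec X' → X = X' := by
        intro X _ X' _ h
        ext v
        have h0 := congrFun h (some v)
        by_cases h1 : v ∈ X <;> by_cases h2 : v ∈ X' <;> simp_all [gvec]
      have heinj : ∀ v ∈ (Finset.univ : Finset V), ∀ v' ∈ (Finset.univ : Finset V),
          evec v = evec v' → v = v' := by
        intro v _ v' _ h
        by_contra hvv
        have h0 := congrFun h (some v)
        simp [evec, hvv] at h0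
      rw [hT, Finset.sum_union hdisj, Finset.sum_image hginj, Finset.sum_image heinj]
        at hsum
      refine ⟨fun X => c (gvec X), fun X => hc0 _, ?_, ?_⟩
      · have h0 := congrFun hsum none
        simpa [bvec, Finset.sum_apply, gvec, evec] using h0.symm
      · intro v
        have h1 := congrFun hsum (some v)
        simp only [Pi.add_apply, Finset.sum_apply, Pi.smul_apply, smul_eq_mul, bvec] at h1
        have hsecond : ∑ v' : V, c (evec v') * evec v' (some v) = c (evec v) := by
          simp [evec, mul_ite, Finset.sum_ite_eq]
        rw [hsecond] at h1
        have hfirst : ∑ X ∈ F, c (gvec X) * gvec X (some v)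
            = ∑ X ∈ F.filter (fun X => v ∈ X), c (gvec X) := by
          rw [Finset.sum_filter]
          refine Finset.sum_congr rfl fun X _ => ?_
          by_cases h2 : v ∈ X <;> simp [gvec, h2]
        rw [hfirst] at h1
        have := hc0 (evec v)
        linarith
    · exfalso
      set w : V → ℚ := fun v => -y (some v) with hw
      have hw0 : ∀ v, 0 ≤ w v := by
        intro v
        have h0 := hy _ (heL v)
        rw [dot_evec] at h0
        simp [hw]
        linarith
      obtain ⟨X, hXF, hX⟩ := hRHS w hw0
      have h1 := hy _ (hgL X hXF)
      rw [dot_gvec] at h1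
      have h2 := hyb
      rw [dot_bvec] at h2
      have e1 : ∑ v ∈ X, w v = -∑ v ∈ X, y (some v) := by simp [hw]
      have e2 : ∑ v : V, w v = -∑ v : V, y (some v) := by simp [hw]
      rw [e1, e2, mul_neg] at hX
      linarith
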